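/- For any natural numbers i, j, n with 1 ≤ j ≤ i ≤ n, the integer j·C(i,j) divides lcm(1, 2, ..., n), where C(i,j) is the binomial coefficient. -/

import Mathlib

/-- `lcmUpTo n` is `lcm(1, 2, ..., n)` (and `1` for `n = 0`). -/
def lcmUpTo (n : ℕ) : ℕ := (Finset.Icc 1 n).lcm id

lemma key_factorization {p i j : ℕ} (hp : p.Prime) (hj : 1 ≤ j) (hij : j ≤ i) :
    j.factorization p + (i.choose j).factorization p ≤ Nat.log p i := by
  have hcp : 0 < i.choose j := Nat.choose_pos hij
  set a := j.factorization p with ha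
  -- Kummer's theorem
  have hfin : FiniteMultiplicity p (i.choose j) :=
    Nat.finiteMultiplicity_iff.2 ⟨hp.ne_one, hcp⟩
  have hkum : ((i.choose j).factorization p : ℕ∞) =
      (((Finset.Ico 1 (Nat.log p i + 1)).filter (fun t => p ^ t ≤ j % p ^ t + (i - j) % p ^ t)).card : ℕ) := by
    rw [← Nat.multiplicity_eq_factorization hp hcp.ne',
      ← hfin.emultiplicity_eq_multiplicity]
    exact hp.emultiplicity_choose hij (lt_add_one _)
  have hkum' : (i.choose j).factorization p =
      ((Finset.Ico 1 (Nat.log p i + 1)).filter (fun t => p ^ t ≤ j % p ^ t + (i - j) % p ^ t)).card := by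
    exact_mod_cast hkum
  -- carries only occur at positions > a
  have hsub : {t ∈ Finset.Ico 1 (Nat.log p i + 1) | p ^ t ≤ j % p ^ t + (i - j) % p ^ t}
      ⊆ Finset.Ico (a + 1) (Nat.log p i + 1) := by
    intro t ht
    simp only [Finset.mem_filter, Finset.mem_Ico] at ht ⊢
    refine ⟨?_, ht.1.2⟩
    by_contra hta
    push_neg at hta
    have hta' : t ≤ a := Nat.lt_succ_iff.mp hta
    have hdvd : p ^ t ∣ j := dvd_trans (pow_dvd_pow p hta') (Nat.ordProj_dvd j p)
    have hmod : j % p ^ t = 0 := Nat.mod_eq_zero_of_dvd hdvd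
    have hlt := Nat.mod_lt (i - j) (pow_pos hp.pos t)
    omega
  have hcard : (i.choose j).factorization p ≤ Nat.log p i - a := by
    rw [hkum']
    calc _ ≤ (Finset.Ico (a + 1) (Nat.log p i + 1)).card := Finset.card_le_card hsub
    _ = Nat.log p i - a := by rw [Nat.card_Ico]; omega
  have halog : a ≤ Nat.log p i := by
    have hpa : p ^ a ∣ j := Nat.ordProj_dvd j p
    have hpi : p ^ a ≤ i := le_trans (Nat.le_of_dvd hj hpa) hij
    exact Nat.le_log_of_pow_le hp.one_lt hpi
  omega

/-- For natural numbers `1 ≤ j ≤ i ≤ n`, the integer `j * C(i, j)`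
divides `lcm(1, ..., n)`. -/
theorem binom_div_lcm (i j n : ℕ) (h1 : 1 ≤ j) (h2 : j ≤ i) (h3 : i ≤ n) :
    (j * i.choose j) ∣ lcmUpTo n := by
  have hcp : 0 < i.choose j := Nat.choose_pos h2
  have hL : lcmUpTo n ≠ 0 := by
    unfold lcmUpTo
    rw [Ne, Finset.lcm_eq_zero_iff]
    simp
  have hjc : j * i.choose j ≠ 0 := by positivity
  rw [← Nat.factorization_le_iff_dvd hjc hL]
  intro p
  by_cases hp : p.Prime
  · have key := key_factorization hp h1 h2
    rw [Nat.factorization_mul (by omega) hcp.ne']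
    simp only [Finsupp.coe_add, Pi.add_apply]
    refine key.trans ?_
    have hdvd : p ^ Nat.log p i ∣ lcmUpTo n := by
      apply Finset.dvd_lcm
      simp only [Finset.mem_Icc]
      constructor
      · exact Nat.one_le_pow _ _ hp.pos
      · exact le_trans (Nat.pow_log_le_self p (by omega)) h3
    exact (Nat.Prime.pow_dvd_iff_le_factorization hp hL).mp hdvd
  · simp [Nat.factorization_eq_zero_of_not_prime _ hp]
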